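/- Let n ≥ 1 be an integer and M_min > 0. Define g(β) = (M_min·ln(1/β) + ln(2n))/(1 − β) for β ∈ (0,1). Then for β* = √M_min/(√M_min + √(ln(2n))) (assuming n ≥ 1 so ln(2n) > 0), one has g(β*) ≤ M_min + (3/2)·√(ln(2n)·M_min) + ln(2n). -/

import Mathlib

/-- `2 log x ≤ x - x⁻¹` for `x ≥ 1`. -/
lemma two_log_le (x : ℝ) (hx : 1 ≤ x) : 2 * Real.log x ≤ x - x⁻¹ := by
  have hd : ∀ y : ℝ, 1 < y → HasDerivAt (fun x : ℝ => x - x⁻¹ - 2 * Real.log x)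
      (1 - (-(y^2)⁻¹) - 2 * y⁻¹) y := by
    intro y hy
    have hy0 : y ≠ 0 := by linarith
    exact ((hasDerivAt_id y).sub (hasDerivAt_inv hy0)).sub
      ((Real.hasDerivAt_log hy0).const_mul 2)
  have key : MonotoneOn (fun x : ℝ => x - x⁻¹ - 2 * Real.log x) (Set.Ici 1) := by
    apply monotoneOn_of_deriv_nonneg (convex_Ici 1)
    · apply ContinuousOn.sub (ContinuousOn.sub continuousOn_id ?_) ?_
      · exact ContinuousOn.inv₀ continuousOn_id (fun y hy => by
          have : (1:ℝ) ≤ y := hy; linarith)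
      · exact ContinuousOn.mul continuousOn_const (Real.continuousOn_log.mono
          (fun y hy => by have : (1:ℝ) ≤ y := hy; simp; linarith))
    · intro y hy
      rw [interior_Ici] at hy
      exact (hd y hy).differentiableAt.differentiableWithinAt
    · intro y hy
      rw [interior_Ici] at hy
      have hy1 : (1:ℝ) < y := hy
      rw [(hd y hy1).deriv]
      have : (1 - (-(y^2)⁻¹) - 2 * y⁻¹) = (1 - y⁻¹)^2 := by
        have hy0 : y ≠ 0 := by linarith
        field_simp; ring
      rw [this]; positivity
  have h := key (Set.self_mem_Ici) (Set.mem_Ici.mpr hx) hx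
  simp at h
  linarith

theorem stmt_13 (n : ℕ) (hn : 1 ≤ n) (Mmin : ℝ) (hMmin : 0 < Mmin)
    (g : ℝ → ℝ)
    (hg : g = fun β => (Mmin * Real.log (1 / β) + Real.log (2 * n)) / (1 - β))
    (βstar : ℝ)
    (hβstar : βstar = Real.sqrt Mmin / (Real.sqrt Mmin + Real.sqrt (Real.log (2 * n)))) :
    g βstar ≤ Mmin + (3 / 2) * Real.sqrt (Real.log (2 * n) * Mmin) + Real.log (2 * n) := by
  have hn1 : (1:ℝ) ≤ (n:ℝ) := by exact_mod_cast hn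
  have hL : 0 < Real.log (2 * n) := Real.log_pos (by nlinarith)
  set L := Real.log (2 * n) with hLdef
  set a := Real.sqrt Mmin with hadef
  set b := Real.sqrt L with hbdef
  have ha : 0 < a := Real.sqrt_pos.mpr hMmin
  have hb : 0 < b := Real.sqrt_pos.mpr hL
  have ha2 : a ^ 2 = Mmin := Real.sq_sqrt hMmin.le
  have hb2 : b ^ 2 = L := Real.sq_sqrt hL.le
  have hab : Real.sqrt (L * Mmin) = b * a := Real.sqrt_mul hL.le Mmin
  have hasum : 0 < a + b := by linarith
  have hβ : βstar = a / (a + b) := hβstar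
  have hinv : 1 / βstar = (a + b) / a := by rw [hβ, one_div_div]
  have hx1 : (1:ℝ) ≤ (a + b) / a := by
    rw [le_div_iff₀ ha]; linarith
  have hxinv : ((a + b) / a)⁻¹ = a / (a + b) := by
    rw [inv_div]
  have key := two_log_le ((a + b) / a) hx1
  rw [hxinv] at key
  -- clear denominators in key
  have key2 : 2 * Real.log ((a + b) / a) * (a * (a + b)) ≤ (a + b)^2 - a^2 := by
    have h := mul_le_mul_of_nonneg_right key (by positivity : (0:ℝ) ≤ a * (a + b))
    calc 2 * Real.log ((a + b) / a) * (a * (a + b))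
        ≤ ((a + b) / a - a / (a + b)) * (a * (a + b)) := h
      _ = (a + b)^2 - a^2 := by field_simp
  have h1mβ : 1 - βstar = b / (a + b) := by
    rw [hβ]; field_simp; ring
  rw [hg]
  simp only
  rw [hinv, h1mβ, div_le_iff₀ (by positivity : (0:ℝ) < b / (a + b))]
  have hc : Real.log ((a+b)/a) ≥ 0 := Real.log_nonneg hx1
  rw [hab]
  have : (Mmin + 3 / 2 * (b * a) + L) * (b / (a + b))
      = (a^2 + 3/2 * (a*b) + b^2) * b / (a + b) := by rw [ha2, hb2]; ring
  rw [this, ge_iff_le, ← ha2, ← hb2] at *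
  rw [le_div_iff₀ hasum]
  nlinarith [key2, ha.le, hb.le, mul_le_mul_of_nonneg_left key2 (ha.le)]
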